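/- Let ρ_k ∈ (0,1), c_k, α_k ∈ ℝ, h̄_{1,0} ≥ 0, B(n) = ∑_{m=0}^M b_m n^m with b_m ≥ 0, and π̄(n) = ∑_k c_k ρ_k^n ≠ 0 for all n ≥ 0, with inhomogeneous rates h̄_{-1,0}(n) from the single direction construction. Then ∑_{n=1}^∞ π̄(n) h̄_{-1,0}(n) B(n) = h̄_{1,0} ∑_{k=1}^K ∑_{m=0}^M c_k ρ_k^{-1} b_m Li_{-m}(ρ_k) − ∑_{k=1}^K ∑_{m=0}^M c_k α_k b_m (1−ρ_k)^{-1} Li_{-m}(ρ_k), provided all series converge absolutely. -/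
import Mathlib


open Finset

theorem stmt_14 (K M : ℕ) (ρ c α : Fin K → ℝ) (b : ℕ → ℝ)
    (hρ : ∀ k, ρ k ∈ Set.Ioo (0:ℝ) 1)
    (hb : ∀ m ∈ Finset.range (M + 1), 0 ≤ b m)
    (hb10 : ℝ) (hhb10 : 0 ≤ hb10)
    (πb : ℕ → ℝ) (hπ : ∀ n, πb n = ∑ k, c k * ρ k ^ n)
    (hπne : ∀ n, πb n ≠ 0)
    (B : ℕ → ℝ) (hB : ∀ n, B n = ∑ m ∈ Finset.range (M + 1), b m * (n : ℝ) ^ m)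
    (hbar : ℕ → ℝ)
    (hhbar : ∀ n, 1 ≤ n →
      hbar n = (πb n)⁻¹ *
        (πb (n - 1) * hb10 - ∑ k, c k * α k * (1 - ρ k)⁻¹ * ρ k ^ n))
    (hsum : Summable (fun n : ℕ => |πb (n + 1) * hbar (n + 1) * B (n + 1)|)) :
    ∑' n : ℕ, πb (n + 1) * hbar (n + 1) * B (n + 1) =
      hb10 * ∑ k, ∑ m ∈ Finset.range (M + 1),
          c k * (ρ k)⁻¹ * b m * ∑' n : ℕ, ((n + 1 : ℕ) : ℝ) ^ m * ρ k ^ (n + 1) -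
        ∑ k, ∑ m ∈ Finset.range (M + 1),
          c k * α k * b m * (1 - ρ k)⁻¹ *
            ∑' n : ℕ, ((n + 1 : ℕ) : ℝ) ^ m * ρ k ^ (n + 1) := by
  -- basic facts about ρ
  have hρ0 : ∀ k, (0:ℝ) < ρ k := fun k => (hρ k).1
  have hρ1 : ∀ k, ρ k < 1 := fun k => (hρ k).2
  have hρne : ∀ k, ρ k ≠ 0 := fun k => ne_of_gt (hρ0 k)
  -- the basic geometric-polynomial series
  set f : Fin K → ℕ → ℕ → ℝ := fun k m n => ((n + 1 : ℕ) : ℝ) ^ m * ρ k ^ (n + 1) with hf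
  have hfs : ∀ k m, Summable (f k m) := by
    intro k m
    have h : Summable (fun n : ℕ => (n : ℝ) ^ m * ρ k ^ n) := by
      have := summable_pow_mul_geometric_of_norm_lt_one (R := ℝ) m
        (r := ρ k) (by rw [Real.norm_eq_abs, abs_of_pos (hρ0 k)]; exact hρ1 k)
      exact this
    have := (summable_nat_add_iff 1).2 h
    exact this
  -- the per-(k,m) summand
  set g : Fin K → ℕ → ℕ → ℝ := fun k m n =>
    hb10 * (c k * (ρ k)⁻¹ * b m) * f k m n -
      (c k * α k * b m * (1 - ρ k)⁻¹) * f k m n with hg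
  have hgs : ∀ k m, Summable (g k m) := fun k m =>
    ((hfs k m).mul_left _).sub ((hfs k m).mul_left _)
  -- pointwise identity
  have key : ∀ n : ℕ, πb (n + 1) * hbar (n + 1) * B (n + 1) =
      ∑ k, ∑ m ∈ Finset.range (M + 1), g k m n := by
    intro n
    rw [hhbar (n + 1) (by omega)]
    have h1 : (n + 1) - 1 = n := rfl
    rw [h1, ← mul_assoc, mul_inv_cancel₀ (hπne (n + 1)), one_mul, hπ n, hB]
    rw [sub_mul]
    simp only [Finset.sum_mul]
    rw [← Finset.sum_sub_distrib]
    refine Finset.sum_congr rfl fun k _ => ?_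
    rw [Finset.mul_sum, Finset.mul_sum, ← Finset.sum_sub_distrib]
    refine Finset.sum_congr rfl fun m _ => ?_
    simp only [hg, hf]
    have hpow : hb10 * (c k * (ρ k)⁻¹ * b m) * (((n + 1 : ℕ) : ℝ) ^ m * ρ k ^ (n + 1)) =
        c k * ρ k ^ n * hb10 * (b m * ((n + 1 : ℕ) : ℝ) ^ m) := by
      rw [pow_succ]
      have : (ρ k)⁻¹ * ρ k = 1 := inv_mul_cancel₀ (hρne k)
      calc hb10 * (c k * (ρ k)⁻¹ * b m) * (((n + 1 : ℕ) : ℝ) ^ m * (ρ k ^ n * ρ k)) =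
          hb10 * c k * b m * ((n + 1 : ℕ) : ℝ) ^ m * ρ k ^ n * ((ρ k)⁻¹ * ρ k) := by ring
        _ = c k * ρ k ^ n * hb10 * (b m * ((n + 1 : ℕ) : ℝ) ^ m) := by rw [this]; ring
    rw [hpow]
    ring
  -- sum the identity
  calc ∑' n : ℕ, πb (n + 1) * hbar (n + 1) * B (n + 1)
      = ∑' n : ℕ, ∑ k, ∑ m ∈ Finset.range (M + 1), g k m n := by
        exact tsum_congr key
    _ = ∑ k, ∑ m ∈ Finset.range (M + 1), ∑' n : ℕ, g k m n := by
        rw [Summable.tsum_finsetSum (fun k _ => summable_sum fun m _ => hgs k m)]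
        exact Finset.sum_congr rfl fun k _ => Summable.tsum_finsetSum fun m _ => hgs k m
    _ = ∑ k, ∑ m ∈ Finset.range (M + 1),
          (hb10 * (c k * (ρ k)⁻¹ * b m) * ∑' n, f k m n -
            (c k * α k * b m * (1 - ρ k)⁻¹) * ∑' n, f k m n) := by
        refine Finset.sum_congr rfl fun k _ => Finset.sum_congr rfl fun m _ => ?_
        rw [hg]
        rw [Summable.tsum_sub ((hfs k m).mul_left _) ((hfs k m).mul_left _),
          tsum_mul_left, tsum_mul_left]
    _ = _ := by
        rw [Finset.mul_sum, ← Finset.sum_sub_distrib]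
        refine Finset.sum_congr rfl fun k _ => ?_
        rw [Finset.mul_sum, ← Finset.sum_sub_distrib]
        refine Finset.sum_congr rfl fun m _ => ?_
        ring
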